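/- arXiv:2409.03035 — 5 statements merged into one kernel-verified Lean document; each statement's English description precedes it below -/
import Mathlib

section
/- Let A be a commutative ring, S a submonoid of A, and A' an A-algebra with IsLocalization S A'. Let B be an A-algebra, T a submonoid of B containing the image of S under the structure map A → B, and B' a B-algebra with IsLocalization T B', where B' is given its induced A'-algebra structure (compatible with all the scalar-tower structures). Then the canonical B-linear map Ω_{B/A} → Ω_{B'/A'} exhibits Ω_{B'/A'} as the localization of the module Ω_{B/A} at T; that is, IsLocalizedModule T holds for the canonical map of Kähler differentials. -/
universe u
set_option linter.unusedSectionVars false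

open TensorProduct

section DerivationExtend

variable {A B B' Q : Type*} [CommRing A] [CommRing B] [Algebra A B] (T : Submonoid B)
  [CommRing B'] [Algebra B B'] [IsLocalization T B']
  [Algebra A B'] [IsScalarTower A B B']
  [AddCommGroup Q] [Module A Q] [Module B Q] [Module B' Q]
  [IsScalarTower A B' Q] [IsScalarTower B B' Q]

include T in
/-- Derivations out of a localization are determined by their values on the image. -/
theorem derivation_ext_of_isLocalization (d₁ d₂ : Derivation A B' Q)
    (h : ∀ b, d₁ (algebraMap B B' b) = d₂ (algebraMap B B' b)) : d₁ = d₂ := by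
  ext x
  obtain ⟨⟨b, t⟩, ht⟩ := IsLocalization.surj (M := T) x
  have key : ∀ d : Derivation A B' Q, algebraMap B B' t • d x =
      d (algebraMap B B' b) - x • d (algebraMap B B' t) := by
    intro d
    rw [← ht, Derivation.leibniz]
    abel
  have h2 : algebraMap B B' t • d₁ x = algebraMap B B' t • d₂ x := by
    rw [key d₁, key d₂, h, h]
  exact (IsUnit.smul_left_cancel (IsLocalization.map_units B' t)).mp h2

variable (δ : Derivation A B Q)

local instance : Module B'ᵐᵒᵖ Q := Module.compHom Q ((RingHom.id B').fromOpposite mul_comm)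

local instance : IsCentralScalar B' Q := ⟨fun _ _ => rfl⟩

/-- The ring hom `B →+* TrivSqZeroExt B' Q` given by `b ↦ (b, δ b)`. -/
noncomputable def derivationToTsze : B →+* TrivSqZeroExt B' Q where
  toFun b := (algebraMap B B' b, δ b)
  map_one' := TrivSqZeroExt.ext (by simp) (by simp)
  map_mul' b₁ b₂ := by
    refine TrivSqZeroExt.ext ?_ ?_
    · exact map_mul (algebraMap B B') b₁ b₂
    · show δ (b₁ * b₂) = algebraMap B B' b₁ • δ b₂ + algebraMap B B' b₂ • δ b₁
      rw [Derivation.leibniz, algebraMap_smul, algebraMap_smul]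
  map_zero' := TrivSqZeroExt.ext (by simp) (by simp)
  map_add' b₁ b₂ := TrivSqZeroExt.ext (by simp; rfl) (by simp; rfl)

@[simp] theorem derivationToTsze_fst (b : B) :
    (derivationToTsze (B' := B') δ b).fst = algebraMap B B' b := rfl

@[simp] theorem derivationToTsze_snd (b : B) :
    (derivationToTsze (B' := B') δ b).snd = δ b := rfl

theorem derivationToTsze_isUnit (t : T) : IsUnit (derivationToTsze (B' := B') δ t) := by
  rw [TrivSqZeroExt.isUnit_iff_isUnit_fst]
  exact IsLocalization.map_units B' t

/-- The induced ring hom on the localization. -/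
noncomputable def derivationLocLift : B' →+* TrivSqZeroExt B' Q :=
  IsLocalization.lift (M := T) (derivationToTsze_isUnit T δ)

@[simp] theorem derivationLocLift_algebraMap (b : B) :
    derivationLocLift T δ (algebraMap B B' b) = derivationToTsze δ b :=
  IsLocalization.lift_eq _ _

theorem derivationLocLift_fst (x : B') : (derivationLocLift T δ x).fst = x := by
  have : (TrivSqZeroExt.fstHom B' B' Q).toRingHom.comp (derivationLocLift T δ) =
      RingHom.id B' := by
    apply IsLocalization.ringHom_ext T
    ext b
    simp
  exact RingHom.congr_fun this x


/-- Extend a derivation to the localization. -/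
noncomputable def derivationOfLocalization : Derivation A B' Q where
  toFun x := (derivationLocLift T δ x).snd
  map_add' x y := by
    show (derivationLocLift T δ (x + y)).snd = _
    rw [map_add]; rfl
  map_smul' a x := by
    show (derivationLocLift T δ (a • x)).snd = a • (derivationLocLift T δ x).snd
    rw [Algebra.smul_def a x, map_mul, IsScalarTower.algebraMap_apply A B B' a,
      derivationLocLift_algebraMap, TrivSqZeroExt.snd_mul]
    simp only [derivationToTsze_fst, derivationToTsze_snd, Derivation.map_algebraMap]
    rw [smul_zero, add_zero, ← IsScalarTower.algebraMap_apply A B B', algebraMap_smul]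
  map_one_eq_zero' := by
    show (derivationLocLift T δ 1).snd = 0
    rw [map_one]
    rfl
  leibniz' x y := by
    show (derivationLocLift T δ (x * y)).snd = _
    rw [map_mul, TrivSqZeroExt.snd_mul]
    show (derivationLocLift T δ x).fst • (derivationLocLift T δ y).snd
      + (derivationLocLift T δ y).fst • (derivationLocLift T δ x).snd = _
    rw [derivationLocLift_fst, derivationLocLift_fst]
    rfl

@[simp] theorem derivationOfLocalization_algebraMap (b : B) :
    derivationOfLocalization T δ (algebraMap B B' b) = δ b := by
  show (derivationLocLift T δ (algebraMap B B' b)).snd = δ b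
  rw [derivationLocLift_algebraMap]
  rfl

end DerivationExtend

section Kaehler

open KaehlerDifferential

attribute [local instance] SMulCommClass.of_commMonoid

variable (A B : Type*) [CommRing A] [CommRing B] [Algebra A B] (T : Submonoid B)
  (B' : Type*) [CommRing B'] [Algebra B B'] [IsLocalization T B']
  [Algebra A B'] [IsScalarTower A B B']

/-- The canonical derivation `B → B' ⊗[B] Ω[B⁄A]`. -/
noncomputable def derB : Derivation A B (B' ⊗[B] Ω[B⁄A]) :=
  (TensorProduct.mk B B' (Ω[B⁄A]) 1).compDer (KaehlerDifferential.D A B)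

@[simp] lemma derB_apply (b : B) : derB A B B' b = 1 ⊗ₜ KaehlerDifferential.D A B b := rfl

/-- The extended derivation `B' → B' ⊗[B] Ω[B⁄A]`. -/
noncomputable def derB' : Derivation A B' (B' ⊗[B] Ω[B⁄A]) :=
  derivationOfLocalization T (derB A B B')

/-- The retraction `Ω[B'⁄A] → B' ⊗[B] Ω[B⁄A]`. -/
noncomputable def retr : Ω[B'⁄A] →ₗ[B'] B' ⊗[B] Ω[B⁄A] :=
  (derB' A B T B').liftKaehlerDifferential

lemma retr_comp : ∀ ω : Ω[B⁄A],
    retr A B T B' (KaehlerDifferential.map A A B B' ω) = 1 ⊗ₜ ω := by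
  intro ω
  have hω : ω ∈ Submodule.span B (Set.range (KaehlerDifferential.D A B)) := by
    rw [KaehlerDifferential.span_range_derivation]; trivial
  induction hω using Submodule.span_induction with
  | mem x hx =>
      obtain ⟨b, rfl⟩ := hx
      rw [KaehlerDifferential.map_D, retr, Derivation.liftKaehlerDifferential_comp_D, derB',
        derivationOfLocalization_algebraMap]
      rfl
  | zero => simp
  | add x y _ _ hx hy => rw [map_add, map_add, hx, hy, TensorProduct.tmul_add]
  | smul b x _ hx =>
      rw [map_smul, ← algebraMap_smul B' b, map_smul, algebraMap_smul, hx,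
        TensorProduct.tmul_smul]

lemma retr_left_inverse :
    retr A B T B' ∘ₗ mapBaseChange A B B' = LinearMap.id := by
  refine LinearMap.ext fun y => ?_
  show retr A B T B' (mapBaseChange A B B' y) = y
  induction y using TensorProduct.induction_on with
  | zero => simp
  | tmul b' ω => rw [mapBaseChange_tmul, map_smul, retr_comp, TensorProduct.smul_tmul', smul_eq_mul,
      mul_one]
  | add x y hx hy => rw [map_add, map_add, hx, hy]

lemma retr_right_inverse :
    mapBaseChange A B B' ∘ₗ retr A B T B' = LinearMap.id := by
  refine Derivation.liftKaehlerDifferential_unique _ _ ?_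
  refine derivation_ext_of_isLocalization T _ _ fun b => ?_
  show mapBaseChange A B B' (retr A B T B' (KaehlerDifferential.D A B' (algebraMap B B' b)))
      = KaehlerDifferential.D A B' (algebraMap B B' b)
  rw [← KaehlerDifferential.map_D A A B B', retr_comp, mapBaseChange_tmul, one_smul,
    KaehlerDifferential.map_D]

/-- `Ω[B'⁄A]` is the base change of `Ω[B⁄A]`. -/
noncomputable def tensorEquiv : B' ⊗[B] Ω[B⁄A] ≃ₗ[B'] Ω[B'⁄A] :=
  LinearEquiv.ofLinear (mapBaseChange A B B') (retr A B T B')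
    (retr_right_inverse A B T B') (retr_left_inverse A B T B')

theorem isLocalizedModule_map_of_same_base :
    IsLocalizedModule T (KaehlerDifferential.map A A B B') := by
  have h0 : IsLocalizedModule T (TensorProduct.mk B B' (Ω[B⁄A]) 1) :=
    (isLocalizedModule_iff_isBaseChange T B' _).mpr (TensorProduct.isBaseChange B (Ω[B⁄A]) B')
  have heq : KaehlerDifferential.map A A B B' =
      ((tensorEquiv A B T B').restrictScalars B).toLinearMap ∘ₗ
        TensorProduct.mk B B' (Ω[B⁄A]) 1 := by
    refine LinearMap.ext fun ω => ?_
    show KaehlerDifferential.map A A B B' ω = tensorEquiv A B T B' (1 ⊗ₜ ω)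
    rw [tensorEquiv]
    show _ = mapBaseChange A B B' (1 ⊗ₜ ω)
    rw [mapBaseChange_tmul, one_smul]
  rw [heq]
  exact IsLocalizedModule.of_linearEquiv T _ _

end Kaehler

/-- Localization of Kähler differentials: if `A'` is the localization of `A` at `S` and
`B'` is the localization of `B` at a submonoid `T` containing the image of `S`, then the
canonical map `Ω[B⁄A] → Ω[B'⁄A']` exhibits `Ω[B'⁄A']` as the localization of `Ω[B⁄A]`
at `T`. -/
theorem isLocalizedModule_map_kaehlerDifferential
    (A : Type*) [CommRing A] (S : Submonoid A)
    (A' : Type*) [CommRing A'] [Algebra A A'] [IsLocalization S A']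
    (B : Type*) [CommRing B] [Algebra A B]
    (T : Submonoid B) (hST : Algebra.algebraMapSubmonoid B S ≤ T)
    (B' : Type*) [CommRing B'] [Algebra B B'] [IsLocalization T B']
    [Algebra A B'] [Algebra A' B'] [IsScalarTower A B B'] [IsScalarTower A A' B']
    [SMulCommClass A' B B'] :
    IsLocalizedModule T (KaehlerDifferential.map A A' B B') := by
  -- `Ω[A'⁄A]` is trivial since `A'` is a localization of `A`.
  haveI : Algebra.FormallyUnramified A A' := Algebra.FormallyUnramified.of_isLocalization S
  haveI hsub : Subsingleton (B' ⊗[A'] (Ω[A'⁄A])) := by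
    constructor
    have h : ∀ x : B' ⊗[A'] (Ω[A'⁄A]), x = 0 := by
      intro x
      induction x using TensorProduct.induction_on with
      | zero => rfl
      | tmul p q => rw [Subsingleton.elim q 0, TensorProduct.tmul_zero]
      | add x y hx hy => rw [hx, hy, add_zero]
    intro a b
    rw [h a, h b]
  -- the map `Ω[B'⁄A] → Ω[B'⁄A']` is bijective
  have hinj : Function.Injective (KaehlerDifferential.map A A' B' B') := by
    rw [injective_iff_map_eq_zero]
    intro x hx
    obtain ⟨y, hy⟩ := (KaehlerDifferential.exact_mapBaseChange_map A A' B' x).mp hx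
    rw [← hy, Subsingleton.elim y 0, map_zero]
  have hsurj : Function.Surjective (KaehlerDifferential.map A A' B' B') :=
    KaehlerDifferential.map_surjective A A' B'
  let e : (Ω[B'⁄A]) ≃ₗ[B'] (Ω[B'⁄A']) :=
    LinearEquiv.ofBijective (KaehlerDifferential.map A A' B' B') ⟨hinj, hsurj⟩
  haveI h1 : IsLocalizedModule T (KaehlerDifferential.map A A B B') :=
    isLocalizedModule_map_of_same_base A B T B'
  have heq : KaehlerDifferential.map A A' B B' =
      (e.restrictScalars B).toLinearMap ∘ₗ KaehlerDifferential.map A A B B' := by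
    refine Derivation.liftKaehlerDifferential_unique
      ((KaehlerDifferential.map A A' B B')) _ ?_
    ext b
    show KaehlerDifferential.map A A' B B' (KaehlerDifferential.D A B b) =
      KaehlerDifferential.map A A' B' B'
        (KaehlerDifferential.map A A B B' (KaehlerDifferential.D A B b))
    rw [KaehlerDifferential.map_D, KaehlerDifferential.map_D, KaehlerDifferential.map_D]
    simp
  rw [heq]
  exact IsLocalizedModule.of_linearEquiv T _ _
end

section
/- Let p be a prime and let B be a commutative ring of characteristic p which is perfect (the Frobenius endomorphism x ↦ x^p is bijective). Then B is formally étale over the prime field 𝔽_p = ZMod p; that is, for every square-zero extension of (ZMod p)-algebras, ring homomorphisms from B lift uniquely. -/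
/-- If `I : Ideal C` squares to zero and `C` has characteristic `p`, the frobenius of `C`
agrees on elements congruent mod `I`. -/
lemma frob_eq_of_mk_eq {p : ℕ} (hp : p.Prime) {C : Type} [CommRing C] [CharP C p]
    (I : Ideal C) (hI : I ^ 2 = ⊥) {x y : C} (h : Ideal.Quotient.mk I x = Ideal.Quotient.mk I y) :
    x ^ p = y ^ p := by
  haveI : Fact p.Prime := ⟨hp⟩
  obtain ⟨i, hi, rfl⟩ : ∃ i ∈ I, y = x + i := by
    refine ⟨y - x, ?_, by ring⟩
    rwa [← Ideal.Quotient.eq_zero_iff_mem, map_sub, sub_eq_zero, eq_comm]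
  have hi2 : i ^ 2 = 0 := by
    have : i ^ 2 ∈ I ^ 2 := by rw [pow_two, pow_two]; exact Ideal.mul_mem_mul hi hi
    rwa [hI, Ideal.mem_bot] at this
  have : i ^ p = 0 := by
    have hp2 : 2 ≤ p := hp.two_le
    calc i ^ p = i ^ 2 * i ^ (p - 2) := by rw [← pow_add]; congr 1; omega
    _ = 0 := by rw [hi2, zero_mul]
  rw [add_pow_char, this, add_zero]

/-- A perfect ring `B` of characteristic `p` is formally étale over the prime field
`𝔽_p = ZMod p` (with the canonical algebra structure coming from `CharP B p`). -/
theorem formallyEtale_zmod_of_perfectRing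
    (p : ℕ) [Fact p.Prime] (B : Type) [CommRing B] [CharP B p] [PerfectRing B p] :
    letI : Algebra (ZMod p) B := ZMod.algebra B p
    Algebra.FormallyEtale (ZMod p) B := by
  letI : Algebra (ZMod p) B := ZMod.algebra B p
  have hp : p.Prime := Fact.out
  rw [Algebra.FormallyEtale.iff_comp_bijective]
  intro C _ _ I hI
  by_cases hC : Subsingleton C
  · haveI : Subsingleton (C ⧸ I) := Ideal.Quotient.mk_surjective.subsingleton
    constructor
    · intro g g' _
      ext b
      exact Subsingleton.elim _ _
    · intro f
      refine ⟨⟨⟨⟨⟨fun _ => 0, Subsingleton.elim _ _⟩, fun _ _ => Subsingleton.elim _ _⟩,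
        Subsingleton.elim _ _, fun _ _ => Subsingleton.elim _ _⟩, fun _ => Subsingleton.elim _ _⟩,
        ?_⟩
      ext b
      exact Subsingleton.elim _ _
  · haveI : Nontrivial C := not_subsingleton_iff_nontrivial.mp hC
    haveI : CharP C p := charP_of_injective_algebraMap
      (algebraMap (ZMod p) C).injective p
    -- the p-th root on B
    set r : B → B := fun b => (frobeniusEquiv B p).symm b with hr
    have hrpow : ∀ b : B, r b ^ p = b := fun b => frobenius_apply_frobeniusEquiv_symm B p b
    have hrmul : ∀ a b : B, r (a * b) = r a * r b := fun a b =>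
      map_mul (frobeniusEquiv B p).symm a b
    have hradd : ∀ a b : B, r (a + b) = r a + r b := fun a b =>
      map_add (frobeniusEquiv B p).symm a b
    have hr0 : r 0 = 0 := map_zero (frobeniusEquiv B p).symm
    have hr1 : r 1 = 1 := map_one (frobeniusEquiv B p).symm
    constructor
    · -- injectivity
      intro g g' h
      ext b
      have hb : Ideal.Quotient.mk I (g (r b)) = Ideal.Quotient.mk I (g' (r b)) := by
        have := congrArg (fun (φ : B →ₐ[ZMod p] C ⧸ I) => φ (r b)) h
        simpa [Ideal.Quotient.mkₐ_eq_mk] using this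
      calc g b = g (r b ^ p) := by rw [hrpow]
        _ = g (r b) ^ p := by rw [map_pow]
        _ = g' (r b) ^ p := frob_eq_of_mk_eq hp I hI hb
        _ = g' (r b ^ p) := by rw [map_pow]
        _ = g' b := by rw [hrpow]
    · -- surjectivity
      intro f
      obtain ⟨σ, hσ⟩ : ∃ σ : C ⧸ I → C, ∀ c, Ideal.Quotient.mk I (σ c) = c := by
        exact ⟨fun c => (Ideal.Quotient.mk_surjective c).choose,
          fun c => (Ideal.Quotient.mk_surjective c).choose_spec⟩
      -- key: the value σ(f (r b))^p only depends on f (r b)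
      have key : ∀ {x : C} {q : C ⧸ I}, Ideal.Quotient.mk I x = q → σ q ^ p = x ^ p := by
        intro x q hq
        exact frob_eq_of_mk_eq hp I hI (by rw [hσ, hq])
      set G : B → C := fun b => σ (f (r b)) ^ p with hG
      have hmk : ∀ b : B, Ideal.Quotient.mk I (G b) = f b := by
        intro b
        rw [hG]
        simp only [map_pow, hσ]
        rw [← map_pow, hrpow]
      have hG1 : G 1 = 1 := by
        have : σ (f (r 1)) ^ p = (1 : C) ^ p := key (by rw [hr1, map_one, map_one])
        simpa using this
      have hGmul : ∀ a b : B, G (a * b) = G a * G b := by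
        intro a b
        have h1 : f (r (a * b)) = Ideal.Quotient.mk I (σ (f (r a)) * σ (f (r b))) := by
          rw [hrmul, map_mul, map_mul, hσ, hσ]
        have : σ (f (r (a * b))) ^ p = (σ (f (r a)) * σ (f (r b))) ^ p := key h1.symm
        simpa [hG, mul_pow] using this
      have hGadd : ∀ a b : B, G (a + b) = G a + G b := by
        intro a b
        have h1 : f (r (a + b)) = Ideal.Quotient.mk I (σ (f (r a)) + σ (f (r b))) := by
          rw [hradd, map_add, map_add, hσ, hσ]
        have : σ (f (r (a + b))) ^ p = (σ (f (r a)) + σ (f (r b))) ^ p := key h1.symm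
        rw [add_pow_char] at this
        simpa [hG] using this
      have hG0 : G 0 = 0 := by
        have : σ (f (r 0)) ^ p = (0 : C) ^ p := key (by rw [hr0, map_zero, map_zero])
        simpa [hG, zero_pow hp.ne_zero] using this
      set Grh : B →+* C :=
        { toFun := G, map_one' := hG1, map_mul' := hGmul, map_zero' := hG0,
          map_add' := hGadd } with hGrh
      refine ⟨{ toRingHom := Grh, commutes' := ?_ }, ?_⟩
      · intro x
        have : Grh.comp (algebraMap (ZMod p) B) = algebraMap (ZMod p) C :=
          RingHom.ext_zmod _ _
        exact DFunLike.congr_fun this x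
      · ext b
        simp only [AlgHom.comp_apply, Ideal.Quotient.mkₐ_eq_mk]
        exact hmk b
end

section
/- Let p be a prime, n ≥ 1, and let B be a nontrivial commutative ring of characteristic p which is perfect (Frobenius is bijective). Then the ring of length-n truncated Witt vectors W_n(B) = TruncatedWittVector p n B has characteristic p^n, and the zeroth-coefficient ring homomorphism W_n(B) → B is surjective with kernel equal to the principal ideal generated by p; in particular it induces a ring isomorphism W_n(B)/(p) ≅ B. -/
open WittVector TruncatedWittVector

/-- The zeroth coefficient ring hom on truncated Witt vectors. -/
noncomputable def truncatedZerothCoeff (p n : ℕ) [Fact p.Prime] (hn : 1 ≤ n)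
    (B : Type*) [CommRing B] : TruncatedWittVector p n B →+* B where
  toFun x := x.coeff ⟨0, hn⟩
  map_zero' := by
    exact TruncatedWittVector.coeff_zero p n B ⟨0, hn⟩
  map_one' := by
    have h : (1 : TruncatedWittVector p n B) = WittVector.truncate n 1 := (map_one _).symm
    rw [h, WittVector.coeff_truncate, WittVector.one_coeff_zero]
  map_add' x y := by
    obtain ⟨a, rfl⟩ := WittVector.truncate_surjective p n B x
    obtain ⟨b, rfl⟩ := WittVector.truncate_surjective p n B y
    rw [← map_add, WittVector.coeff_truncate, WittVector.coeff_truncate,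
      WittVector.coeff_truncate]
    exact WittVector.add_coeff_zero a b
  map_mul' x y := by
    obtain ⟨a, rfl⟩ := WittVector.truncate_surjective p n B x
    obtain ⟨b, rfl⟩ := WittVector.truncate_surjective p n B y
    rw [← map_mul, WittVector.coeff_truncate, WittVector.coeff_truncate,
      WittVector.coeff_truncate]
    exact WittVector.mul_coeff_zero a b

theorem truncatedZerothCoeff_apply (p n : ℕ) [Fact p.Prime] (hn : 1 ≤ n)
    (B : Type*) [CommRing B] (x : TruncatedWittVector p n B) :
    truncatedZerothCoeff p n hn B x = x.coeff ⟨0, hn⟩ := rfl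

theorem truncatedZerothCoeff_surjective (p n : ℕ) [Fact p.Prime] (hn : 1 ≤ n)
    (B : Type*) [CommRing B] : Function.Surjective (truncatedZerothCoeff p n hn B) := by
  intro b
  refine ⟨TruncatedWittVector.mk p (fun i => if i = ⟨0, hn⟩ then b else 0), ?_⟩
  rw [truncatedZerothCoeff_apply, TruncatedWittVector.coeff_mk, if_pos rfl]

/-- For a nontrivial perfect ring `B` of characteristic `p` and `n ≥ 1`, the truncated
Witt vectors `W_n(B)` have characteristic `p^n`, and the zeroth-coefficient ring
homomorphism `W_n(B) → B` is surjective with kernel the ideal `(p)`; in particular it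
induces a ring isomorphism `W_n(B)/(p) ≅ B`. -/
theorem truncatedWittVector_charP_and_zeroth_coeff
    (p n : ℕ) [Fact p.Prime] (hn : 1 ≤ n)
    (B : Type*) [CommRing B] [Nontrivial B] [CharP B p] [PerfectRing B p] :
    CharP (TruncatedWittVector p n B) (p ^ n) ∧
    ∃ f : TruncatedWittVector p n B →+* B,
      (∀ x, f x = x.coeff ⟨0, hn⟩) ∧
      Function.Surjective f ∧
      RingHom.ker f = Ideal.span {(p : TruncatedWittVector p n B)} ∧
      Nonempty ((TruncatedWittVector p n B ⧸
        Ideal.span {(p : TruncatedWittVector p n B)}) ≃+* B) := by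
  have hp : p.Prime := Fact.out
  -- p ^ n = 0 in the truncated Witt vectors
  have h0 : ((p ^ n : ℕ) : TruncatedWittVector p n B) = 0 := by
    rw [Nat.cast_pow]
    have h : (p : TruncatedWittVector p n B) ^ n
        = WittVector.truncate n ((p : WittVector p B) ^ n) := by
      rw [map_pow, map_natCast]
    rw [h]
    apply TruncatedWittVector.ext
    intro i
    rw [WittVector.coeff_truncate, TruncatedWittVector.coeff_zero]
    exact WittVector.coeff_p_pow_eq_zero p B (Nat.ne_of_lt i.2)
  -- characteristic
  have hchar : ringChar (TruncatedWittVector p n B) = p ^ n := by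
    have hdvd : ringChar (TruncatedWittVector p n B) ∣ p ^ n := ringChar.dvd h0
    obtain ⟨i, hin, hi⟩ := (Nat.dvd_prime_pow hp).mp hdvd
    have hzero : ((p : TruncatedWittVector p n B)) ^ i = 0 := by
      have h := CharP.cast_eq_zero (TruncatedWittVector p n B)
        (ringChar (TruncatedWittVector p n B))
      rw [hi, Nat.cast_pow] at h
      exact h
    rw [hi, TruncatedWittVector.eq_of_le_of_cast_pow_eq_zero p n B i hin hzero]
  have hCharP : CharP (TruncatedWittVector p n B) (p ^ n) := by
    have := ringChar.charP (TruncatedWittVector p n B)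
    rwa [hchar] at this
  have hker : RingHom.ker (truncatedZerothCoeff p n hn B)
      = Ideal.span {(p : TruncatedWittVector p n B)} := by
    apply le_antisymm
    · intro x hx
      have hx0 : x.coeff ⟨0, hn⟩ = 0 := hx
      set a : WittVector p B := x.out with ha
      have ha0 : a.coeff 0 = 0 := by
        have h := TruncatedWittVector.coeff_out x ⟨0, hn⟩
        rwa [hx0] at h
      have hav : a = WittVector.verschiebung (a.shift 1) := by
        have h := WittVector.eq_iterate_verschiebung (x := a) (n := 1)
          (fun i hi => by interval_cases i; exact ha0)
        simpa using h
      obtain ⟨z, hz⟩ := (WittVector.frobenius_bijective p B).surjective (a.shift 1)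
      have hap : a = z * p := by
        rw [hav, ← hz, WittVector.verschiebung_frobenius]
      have hxa : x = WittVector.truncate n a := by
        rw [ha]
        exact (TruncatedWittVector.truncateFun_out x).symm
      rw [Ideal.mem_span_singleton]
      refine ⟨WittVector.truncate n z, ?_⟩
      rw [hxa, hap, map_mul, map_natCast, mul_comm]
    · rw [Ideal.span_le, Set.singleton_subset_iff, SetLike.mem_coe, RingHom.mem_ker]
      have h : (p : TruncatedWittVector p n B)
          = WittVector.truncate n (p : WittVector p B) := (map_natCast _ _).symm
      rw [truncatedZerothCoeff_apply, h, WittVector.coeff_truncate]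
      exact WittVector.coeff_p_zero p B
  refine ⟨hCharP, truncatedZerothCoeff p n hn B, fun x => rfl,
    truncatedZerothCoeff_surjective p n hn B, hker, ?_⟩
  rw [← hker]
  exact ⟨RingHom.quotientKerEquivOfSurjective (truncatedZerothCoeff_surjective p n hn B)⟩
end

section
/- Let p be a prime and n ≥ 1. Let C be a commutative (ZMod (p^n))-algebra which is flat as a (ZMod (p^n))-module, and suppose the quotient ring C̄ = C/(p) (the quotient of C by the principal ideal generated by p) has characteristic p and is perfect (Frobenius is bijective). Then C is isomorphic as a ring to the length-n truncated Witt vectors TruncatedWittVector p n C̄; in other words, a flat deformation of a perfect ring of characteristic p over Z/p^n is unique up to isomorphism and is given by truncated Witt vectors. -/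
open WittVector Finset

section Ghost

variable {p : ℕ} [hp : Fact p.Prime] {C : Type*} [CommRing C]

lemma ghost_congr {n : ℕ} (hn : 1 ≤ n) (hpn : (p : C) ^ n = 0) {y z : WittVector p C}
    (h : ∀ i < n, (p : C) ∣ y.coeff i - z.coeff i) :
    WittVector.ghostComponent (n - 1) y = WittVector.ghostComponent (n - 1) z := by
  rw [ghostComponent_apply, ghostComponent_apply, aeval_wittPolynomial, aeval_wittPolynomial,
    show n - 1 + 1 = n by omega]
  refine Finset.sum_congr rfl fun i hi => ?_
  rw [Finset.mem_range] at hi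
  have h1 : (p : C) ^ (n - 1 - i + 1) ∣
      y.coeff i ^ p ^ (n - 1 - i) - z.coeff i ^ p ^ (n - 1 - i) :=
    dvd_sub_pow_of_dvd_sub (h i hi) _
  have h2 : (p : C) ^ n ∣ (p : C) ^ i * y.coeff i ^ p ^ (n - 1 - i)
      - (p : C) ^ i * z.coeff i ^ p ^ (n - 1 - i) := by
    have hexp : (p : C) ^ n = (p : C) ^ i * (p : C) ^ (n - 1 - i + 1) := by
      rw [← pow_add]; congr 1; omega
    rw [← mul_sub, hexp]
    exact mul_dvd_mul_left _ h1
  rw [hpn, zero_dvd_iff, sub_eq_zero] at h2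
  rw [h2]

end Ghost

section Theta

variable (p n : ℕ) [hp : Fact p.Prime] (C : Type*) [CommRing C]

/-- A set-theoretic section of the projection `C → C/(p)`. -/
noncomputable def wsec : (C ⧸ Ideal.span {(p : C)}) → C :=
  Function.surjInv Ideal.Quotient.mk_surjective

lemma wsec_spec (b : C ⧸ Ideal.span {(p : C)}) :
    Ideal.Quotient.mk (Ideal.span {(p : C)}) (wsec p C b) = b :=
  Function.surjInv_eq _ _

/-- A coefficientwise set-theoretic lift of Witt vectors along `C → C/(p)`. -/
noncomputable def wlift (x : WittVector p (C ⧸ Ideal.span {(p : C)})) : WittVector p C :=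
  WittVector.mk p fun i => wsec p C (x.coeff i)

lemma wlift_coeff (x : WittVector p (C ⧸ Ideal.span {(p : C)})) (i : ℕ) :
    (wlift p C x).coeff i = wsec p C (x.coeff i) :=
  congrFun (WittVector.coeff_mk p _) i

lemma map_wlift (x : WittVector p (C ⧸ Ideal.span {(p : C)})) :
    WittVector.map (Ideal.Quotient.mk (Ideal.span {(p : C)})) (wlift p C x) = x := by
  apply WittVector.ext
  intro i
  rw [WittVector.map_coeff, wlift_coeff, wsec_spec]

/-- The underlying function of Fontaine's θ : it sends a Witt vector over `C/(p)` to the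
`(n-1)`-st ghost component of any coefficientwise lift to `C`. -/
noncomputable def theta0 (x : WittVector p (C ⧸ Ideal.span {(p : C)})) : C :=
  WittVector.ghostComponent (n - 1) (wlift p C x)

lemma theta0_eq (hn : 1 ≤ n) (hpn : (p : C) ^ n = 0)
    (x : WittVector p (C ⧸ Ideal.span {(p : C)})) (y : WittVector p C)
    (h : ∀ i < n, Ideal.Quotient.mk (Ideal.span {(p : C)}) (y.coeff i) = x.coeff i) :
    theta0 p n C x = WittVector.ghostComponent (n - 1) y := by
  refine ghost_congr hn hpn fun i hi => ?_
  have h1 : Ideal.Quotient.mk (Ideal.span {(p : C)}) ((wlift p C x).coeff i)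
      = Ideal.Quotient.mk (Ideal.span {(p : C)}) (y.coeff i) := by
    rw [h i hi, wlift_coeff, wsec_spec]
  rw [Ideal.Quotient.eq, Ideal.mem_span_singleton] at h1
  exact h1

/-- θ as a ring homomorphism on full Witt vectors. -/
noncomputable def theta0Hom (hn : 1 ≤ n) (hpn : (p : C) ^ n = 0) :
    WittVector p (C ⧸ Ideal.span {(p : C)}) →+* C where
  toFun := theta0 p n C
  map_one' := by
    have h1 : theta0 p n C 1 = WittVector.ghostComponent (n - 1) (1 : WittVector p C) := by
      apply theta0_eq p n C hn hpn
      intro i hi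
      rw [← WittVector.map_coeff (Ideal.Quotient.mk (Ideal.span {(p : C)})) _ i, map_one]
    rw [h1, map_one]
  map_mul' x y := by
    show theta0 p n C (x * y) = theta0 p n C x * theta0 p n C y
    have h1 : theta0 p n C (x * y)
        = WittVector.ghostComponent (n - 1) (wlift p C x * wlift p C y) := by
      apply theta0_eq p n C hn hpn
      intro i hi
      rw [← WittVector.map_coeff (Ideal.Quotient.mk (Ideal.span {(p : C)})) _ i, map_mul,
        map_wlift, map_wlift]
    rw [h1, map_mul]
    rfl
  map_zero' := by
    show theta0 p n C 0 = 0
    have h1 : theta0 p n C 0 = WittVector.ghostComponent (n - 1) (0 : WittVector p C) := by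
      apply theta0_eq p n C hn hpn
      intro i hi
      rw [← WittVector.map_coeff (Ideal.Quotient.mk (Ideal.span {(p : C)})) _ i, map_zero]
    rw [h1, map_zero]
  map_add' x y := by
    show theta0 p n C (x + y) = theta0 p n C x + theta0 p n C y
    have h1 : theta0 p n C (x + y)
        = WittVector.ghostComponent (n - 1) (wlift p C x + wlift p C y) := by
      apply theta0_eq p n C hn hpn
      intro i hi
      rw [← WittVector.map_coeff (Ideal.Quotient.mk (Ideal.span {(p : C)})) _ i, map_add,
        map_wlift, map_wlift]
    rw [h1, map_add]
    rfl

/-- θ as a ring homomorphism on length-`n` truncated Witt vectors. -/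
noncomputable def theta (hn : 1 ≤ n) (hpn : (p : C) ^ n = 0) :
    TruncatedWittVector p n (C ⧸ Ideal.span {(p : C)}) →+* C :=
  (WittVector.truncate n).liftOfRightInverse
    (Function.surjInv (WittVector.truncate_surjective p n _))
    (Function.rightInverse_surjInv (WittVector.truncate_surjective p n _))
    ⟨theta0Hom p n C hn hpn, by
      intro x hx
      rw [RingHom.mem_ker] at hx ⊢
      have h1 : theta0 p n C x = WittVector.ghostComponent (n - 1) (0 : WittVector p C) := by
        apply theta0_eq p n C hn hpn
        intro i hi
        have h2 : x.coeff i = 0 := by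
          have h3 := congrArg (fun t => TruncatedWittVector.coeff (⟨i, hi⟩ : Fin n) t) hx
          simpa [WittVector.coeff_truncate] using h3
        simp [h2]
      show theta0 p n C x = 0
      rw [h1, map_zero]⟩

lemma theta_spec (hn : 1 ≤ n) (hpn : (p : C) ^ n = 0)
    (x : WittVector p (C ⧸ Ideal.span {(p : C)})) :
    theta p n C hn hpn (WittVector.truncate n x) = theta0 p n C x :=
  RingHom.liftOfRightInverse_comp_apply _ _ _ _ _

lemma theta_ghost (hn : 1 ≤ n) (hpn : (p : C) ^ n = 0)
    (x : WittVector p (C ⧸ Ideal.span {(p : C)})) (f : ℕ → C)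
    (h : ∀ i < n, Ideal.Quotient.mk (Ideal.span {(p : C)}) (f i) = x.coeff i) :
    theta p n C hn hpn (WittVector.truncate n x)
      = ∑ i ∈ Finset.range n, (p : C) ^ i * f i ^ p ^ (n - 1 - i) := by
  rw [theta_spec, theta0_eq p n C hn hpn x (WittVector.mk p f)
    (by intro i hi; rw [WittVector.coeff_mk]; exact h i hi)]
  rw [ghostComponent_apply, aeval_wittPolynomial, show n - 1 + 1 = n by omega,
    WittVector.coeff_mk]

end Theta
section Flat

lemma flat_pow_ann (p n : ℕ) [hp : Fact p.Prime] (C : Type*) [CommRing C]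
    [Algebra (ZMod (p ^ n)) C] [Module.Flat (ZMod (p ^ n)) C] {k : ℕ} (hk : k ≤ n)
    {y : C} (hy : (p : C) ^ k * y = 0) : ∃ z : C, y = (p : C) ^ (n - k) * z := by
  haveI : NeZero (p ^ n) := ⟨pow_ne_zero _ hp.out.ne_zero⟩
  set R := ZMod (p ^ n)
  have hsmul : ∀ (j : ℕ) (c : C), ((p : R) ^ j) • c = (p : C) ^ j * c := by
    intro j c
    rw [Algebra.smul_def, map_pow, map_natCast]
  have hpR : (p : R) ^ n = 0 := by
    have h0 : ((p ^ n : ℕ) : R) = 0 := ZMod.natCast_self _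
    push_cast at h0; exact h0
  set f : R →ₗ[R] R := LinearMap.lsmul R R ((p : R) ^ (n - k)) with hf
  set g : R →ₗ[R] R := LinearMap.lsmul R R ((p : R) ^ k) with hg
  have hexact : Function.Exact f g := by
    intro x
    constructor
    · intro hx
      obtain ⟨m, rfl⟩ := ZMod.natCast_zmod_surjective x
      have h0 : ((p ^ k * m : ℕ) : R) = 0 := by
        push_cast
        exact_mod_cast (by simpa [hg, LinearMap.lsmul_apply, smul_eq_mul] using hx :
          (p : R) ^ k * (m : R) = 0)
      rw [ZMod.natCast_eq_zero_iff] at h0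
      obtain ⟨j, hj⟩ := h0
      have hm : m = p ^ (n - k) * j := by
        have hpk : 0 < p ^ k := pow_pos hp.out.pos k
        apply Nat.eq_of_mul_eq_mul_left hpk
        rw [hj, show p ^ n = p ^ k * p ^ (n - k) by rw [← pow_add]; congr 1; omega]
        ring
      refine ⟨(j : R), ?_⟩
      show ((p : R) ^ (n - k)) • (j : R) = (m : R)
      rw [smul_eq_mul, hm]; rw [Nat.cast_mul, Nat.cast_pow]
    · rintro ⟨w, rfl⟩
      show ((p : R) ^ k) • (((p : R) ^ (n - k)) • w) = 0
      rw [smul_smul, ← pow_add, show k + (n - k) = n by omega, hpR, zero_smul]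
  have hex2 := Module.Flat.lTensor_exact C hexact
  have hy0 : LinearMap.lTensor C g ((TensorProduct.rid R C).symm y) = 0 := by
    rw [TensorProduct.rid_symm_apply, LinearMap.lTensor_tmul]
    have h1 : g (1 : R) = ((p : R) ^ k) • (1 : R) := rfl
    rw [h1, TensorProduct.tmul_smul, TensorProduct.smul_tmul', hsmul, hy,
      TensorProduct.zero_tmul]
  obtain ⟨w, hw⟩ := (hex2 _).mp hy0
  have hconj : ∀ v : TensorProduct R C R,
      TensorProduct.rid R C (LinearMap.lTensor C f v)
        = ((p : R) ^ (n - k)) • TensorProduct.rid R C v := by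
    intro v
    induction v using TensorProduct.induction_on with
    | zero => simp
    | tmul c r =>
        rw [LinearMap.lTensor_tmul]
        have h1 : f r = ((p : R) ^ (n - k)) * r := rfl
        rw [h1, TensorProduct.rid_tmul, TensorProduct.rid_tmul, mul_smul]
    | add v1 v2 ih1 ih2 => rw [map_add, map_add, map_add, ih1, ih2, smul_add]
  refine ⟨TensorProduct.rid R C w, ?_⟩
  have h2 := congrArg (TensorProduct.rid R C) hw
  rw [hconj, LinearEquiv.apply_symm_apply, hsmul] at h2
  exact h2.symm

end Flat
/-- Uniqueness of flat deformations of perfect rings of characteristic `p` over `ℤ/p^n`: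
if `C` is a flat `ZMod (p^n)`-algebra whose reduction `C/(p)` has characteristic `p` and
is perfect, then `C` is isomorphic to the length-`n` truncated Witt vectors of `C/(p)`. -/
theorem flat_deformation_eq_truncatedWittVector
    (p n : ℕ) [Fact p.Prime] (hn : 1 ≤ n)
    (C : Type*) [CommRing C] [Algebra (ZMod (p ^ n)) C] [Module.Flat (ZMod (p ^ n)) C]
    [CharP (C ⧸ Ideal.span {(p : C)}) p] [PerfectRing (C ⧸ Ideal.span {(p : C)}) p] :
    Nonempty (C ≃+* TruncatedWittVector p n (C ⧸ Ideal.span {(p : C)})) := by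
  classical
  have hp : Fact p.Prime := inferInstance
  have hpn : (p : C) ^ n = 0 := by
    have h1 : (p : C) = algebraMap (ZMod (p ^ n)) C (p : ZMod (p ^ n)) := by
      rw [map_natCast]
    have h2 : ((p : ZMod (p ^ n))) ^ n = 0 := by
      have h3 : ((p ^ n : ℕ) : ZMod (p ^ n)) = 0 := ZMod.natCast_self _
      push_cast at h3; exact h3
    rw [h1, ← map_pow, h2, map_zero]
  set θ := theta p n C hn hpn with hθ
  have hπp : Ideal.Quotient.mk (Ideal.span {(p : C)}) (p : C) = 0 := by
    rw [Ideal.Quotient.eq_zero_iff_mem]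
    exact Ideal.mem_span_singleton_self _
  -- the single-term computation
  have hsingle : ∀ (k : ℕ), k < n → ∀ a : C ⧸ Ideal.span {(p : C)},
      θ (WittVector.truncate n (WittVector.mk p (fun i => if i = k then a else 0)))
        = (p : C) ^ k * (wsec p C a) ^ p ^ (n - 1 - k) := by
    intro k hk a
    have hg := theta_ghost p n C hn hpn (WittVector.mk p (fun i => if i = k then a else 0))
      (fun i => if i = k then wsec p C a else 0) ?_
    · rw [hg, Finset.sum_eq_single_of_mem k (Finset.mem_range.mpr hk)]
      · rw [if_pos rfl]
      · intro b _ hb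
        rw [if_neg hb, zero_pow (pow_ne_zero _ hp.out.ne_zero), mul_zero]
    · intro i _
      rw [WittVector.coeff_mk]
      by_cases h' : i = k
      · rw [if_pos h', if_pos h', wsec_spec]
      · rw [if_neg h', if_neg h', map_zero]
  -- surjectivity
  have hsurj : Function.Surjective θ := by
    intro c
    have main : ∀ k : ℕ, ∃ t d, c = θ t + (p : C) ^ k * d := by
      intro k
      induction k with
      | zero => exact ⟨0, c, by simp⟩
      | succ k ih =>
        obtain ⟨t, d, hd⟩ := ih
        by_cases hk : k < n
        · obtain ⟨a, ha⟩ := ((bijective_frobenius (C ⧸ Ideal.span {(p : C)}) p).2.iterate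
            (n - 1 - k)) (Ideal.Quotient.mk (Ideal.span {(p : C)}) d)
          rw [iterate_frobenius] at ha
          have hmod : Ideal.Quotient.mk (Ideal.span {(p : C)})
              ((wsec p C a) ^ p ^ (n - 1 - k)) = Ideal.Quotient.mk (Ideal.span {(p : C)}) d := by
            rw [map_pow, wsec_spec]
            exact ha
          rw [Ideal.Quotient.eq, Ideal.mem_span_singleton] at hmod
          obtain ⟨e, he⟩ := hmod
          refine ⟨t + WittVector.truncate n (WittVector.mk p (fun i => if i = k then a else 0)),
            -e, ?_⟩
          rw [map_add, hsingle k hk a, hd]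
          have hd2 : d = (wsec p C a) ^ p ^ (n - 1 - k) - (p : C) * e := by
            rw [← he]; ring
          rw [hd2]; ring
        · refine ⟨t, 0, ?_⟩
          have h0 : (p : C) ^ k = 0 := by
            rw [show k = n + (k - n) by omega, pow_add, hpn, zero_mul]
          rw [hd, h0]; ring
    obtain ⟨t, d, h⟩ := main n
    exact ⟨t, by rw [h, hpn, zero_mul, add_zero]⟩
  -- injectivity
  have hinj : Function.Injective θ := by
    rw [injective_iff_map_eq_zero]
    intro t ht
    obtain ⟨x, rfl⟩ := WittVector.truncate_surjective p n _ t
    have key : ∀ k, k ≤ n → ∀ i, i < k → x.coeff i = 0 := by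
      intro k
      induction k with
      | zero => intro _ i hi; exact absurd hi (Nat.not_lt_zero i)
      | succ k ih =>
        intro hk i hi
        rcases Nat.lt_or_ge i k with hik | hik
        · exact ih (by omega) i hik
        · have hik' : i = k := by omega
          subst hik'
          have hkn : i < n := by omega
          have hg := theta_ghost p n C hn hpn x
            (fun j => if j < i then 0 else wsec p C (x.coeff j)) ?_
          swap
          · intro j _
            by_cases h' : j < i
            · rw [if_pos h', map_zero, ih (by omega) j h']
            · rw [if_neg h', wsec_spec]
          rw [ht] at hg
          set S := ∑ j ∈ Finset.Ico i n,
            (p : C) ^ (j - i) * (wsec p C (x.coeff j)) ^ p ^ (n - 1 - j) with hS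
          have hsum : ∑ j ∈ Finset.range n,
              (p : C) ^ j * (if j < i then 0 else wsec p C (x.coeff j)) ^ p ^ (n - 1 - j)
              = (p : C) ^ i * S := by
            rw [Finset.range_eq_Ico, ← Finset.sum_Ico_consecutive _ (Nat.zero_le i) hkn.le, hS,
              Finset.mul_sum]
            have h1 : ∑ j ∈ Finset.Ico 0 i,
                (p : C) ^ j * (if j < i then 0 else wsec p C (x.coeff j)) ^ p ^ (n - 1 - j)
                = 0 := by
              refine Finset.sum_eq_zero fun j hj => ?_
              rw [Finset.mem_Ico] at hj
              rw [if_pos hj.2, zero_pow (pow_ne_zero _ hp.out.ne_zero), mul_zero]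
            rw [h1, zero_add]
            refine Finset.sum_congr rfl fun j hj => ?_
            rw [Finset.mem_Ico] at hj
            rw [if_neg (by omega), ← mul_assoc, ← pow_add, show i + (j - i) = j by omega]
          rw [hsum] at hg
          obtain ⟨z, hzz⟩ := flat_pow_ann p n C hkn.le hg.symm
          have hpeel : S = (wsec p C (x.coeff i)) ^ p ^ (n - 1 - i)
              + ∑ j ∈ Finset.Ico (i + 1) n,
                  (p : C) ^ (j - i) * (wsec p C (x.coeff j)) ^ p ^ (n - 1 - j) := by
            rw [hS, Finset.sum_eq_sum_Ico_succ_bot hkn]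
            simp
          have hπS : Ideal.Quotient.mk (Ideal.span {(p : C)}) S = 0 := by
            rw [hzz, map_mul, map_pow, hπp, zero_pow (by omega : n - i ≠ 0), zero_mul]
          have hπT : Ideal.Quotient.mk (Ideal.span {(p : C)})
              (∑ j ∈ Finset.Ico (i + 1) n,
                (p : C) ^ (j - i) * (wsec p C (x.coeff j)) ^ p ^ (n - 1 - j)) = 0 := by
            rw [map_sum]
            refine Finset.sum_eq_zero fun j hj => ?_
            rw [Finset.mem_Ico] at hj
            rw [map_mul, map_pow, hπp, zero_pow (by omega : j - i ≠ 0), zero_mul]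
          have hfin : (x.coeff i) ^ p ^ (n - 1 - i) = 0 := by
            have h5 := congrArg (Ideal.Quotient.mk (Ideal.span {(p : C)})) hpeel
            rw [hπS, map_add, hπT, add_zero, map_pow, wsec_spec] at h5
            exact h5.symm
          have h6 : (frobenius (C ⧸ Ideal.span {(p : C)}) p)^[n - 1 - i] (x.coeff i)
              = (frobenius (C ⧸ Ideal.span {(p : C)}) p)^[n - 1 - i] 0 := by
            rw [iterate_frobenius, hfin]
            exact (Function.iterate_fixed (map_zero _) _).symm
          exact (injective_frobenius _ p).iterate (n - 1 - i) h6
    ext j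
    rw [WittVector.coeff_truncate, key n le_rfl j.1 j.2]
    simp
  exact ⟨(RingEquiv.ofBijective θ ⟨hinj, hsurj⟩).symm⟩
end

section
/- Let p be a prime and R a commutative ring which is p-adically complete (complete and separated for the topology defined by the ideal (p), i.e. IsAdicComplete (Ideal.span {p}) R) and p-torsion-free (p·x = 0 implies x = 0 for x ∈ R). Assume the quotient R/(p) has characteristic p, and let R^♭ = Perfection(R/(p), p) be the inverse-limit perfection of R/(p) along Frobenius, with canonical projection pr₀ : R^♭ → R/(p) given by the zeroth component. Then there exists a unique ring homomorphism θ : W(R^♭) → R from the p-typical Witt vectors of R^♭ to R such that for every Witt vector x, the image θ(x) modulo (p) equals pr₀ applied to the zeroth Witt coefficient of x; that is, the reduction of θ modulo p is the canonical map W(R^♭) → R^♭ → R/(p). (This is Fontaine's map.) -/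
set_option maxHeartbeats 1600000
set_option synthInstance.maxHeartbeats 400000
set_option linter.unusedSectionVars false

namespace FontaineAux

open WittVector Function

variable {p : ℕ} [hp : Fact p.Prime] {R : Type*} [CommRing R]

theorem geom_sum_mem {u v : R} (h : u - v ∈ Ideal.span {(p : R)}) :
    (∑ i ∈ Finset.range p, u ^ i * v ^ (p - 1 - i)) ∈ Ideal.span {(p : R)} := by
  have hq : Ideal.Quotient.mk (Ideal.span {(p : R)}) u = Ideal.Quotient.mk _ v :=
    (Ideal.Quotient.mk_eq_mk_iff_sub_mem _ _).mpr h
  rw [← Ideal.Quotient.eq_zero_iff_mem, map_sum]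
  have hterm : ∀ i ∈ Finset.range p,
      (Ideal.Quotient.mk (Ideal.span {(p : R)})) (u ^ i * v ^ (p - 1 - i)) =
        (Ideal.Quotient.mk (Ideal.span {(p : R)}) v) ^ (p - 1) := by
    intro i hi
    rw [map_mul, map_pow, map_pow, hq, ← pow_add]
    congr 1
    have := Finset.mem_range.mp hi
    omega
  rw [Finset.sum_congr rfl hterm, Finset.sum_const, Finset.card_range, nsmul_eq_mul]
  have hp0 : ((p : ℕ) : R ⧸ Ideal.span {(p : R)}) = 0 := by
    rw [← map_natCast (Ideal.Quotient.mk (Ideal.span {(p : R)})),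
      Ideal.Quotient.eq_zero_iff_mem]
    exact Ideal.mem_span_singleton_self _
  rw [hp0, zero_mul]

/-- Key congruence: if `a ≡ b mod p` then `a^(p^k) ≡ b^(p^k) mod p^(k+1)`. -/
theorem pow_p_pow_sub_mem (k : ℕ) {a b : R} (h : a - b ∈ Ideal.span {(p : R)}) :
    a ^ p ^ k - b ^ p ^ k ∈ Ideal.span {(p : R) ^ (k + 1)} := by
  induction k with
  | zero => simpa using h
  | succ k ih =>
    have huv' : a ^ p ^ k - b ^ p ^ k ∈ Ideal.span {(p : R)} :=
      Ideal.span_singleton_le_span_singleton.mpr (dvd_pow_self _ (Nat.succ_ne_zero k)) ih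
    have hsum := geom_sum_mem (p := p) huv'
    have hfac : a ^ p ^ (k + 1) - b ^ p ^ (k + 1) =
        (∑ i ∈ Finset.range p, (a ^ p ^ k) ^ i * (b ^ p ^ k) ^ (p - 1 - i)) *
          (a ^ p ^ k - b ^ p ^ k) := by
      rw [geom_sum₂_mul, ← pow_mul, ← pow_mul, ← pow_succ]
    rw [hfac]
    have := Ideal.mul_mem_mul hsum ih
    rwa [Ideal.span_singleton_mul_span_singleton, ← pow_succ'] at this

theorem ghostComponent_zero_eq {A : Type*} [CommRing A] (w : WittVector p A) :
    WittVector.ghostComponent 0 w = w.coeff 0 := by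
  rw [WittVector.ghostComponent_apply, wittPolynomial_zero, MvPolynomial.aeval_X]

section Generic

variable (A : Type*) [CommRing A] [CharP A p] [PerfectRing A p]

/-- Decomposition `x = [x₀] + p z` in Witt vectors over a perfect ring. -/
theorem exists_teichmuller_add (x : WittVector p A) :
    ∃ z : WittVector p A, x = WittVector.teichmuller p (x.coeff 0) + p * z := by
  have hd0 : (x - WittVector.teichmuller p (x.coeff 0)).coeff 0 = 0 := by
    have h2 : WittVector.ghostComponent 0 (x - WittVector.teichmuller p (x.coeff 0)) =
        WittVector.ghostComponent 0 x -
          WittVector.ghostComponent 0 (WittVector.teichmuller p (x.coeff 0)) :=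
      map_sub _ _ _
    rw [ghostComponent_zero_eq, ghostComponent_zero_eq, ghostComponent_zero_eq,
      WittVector.teichmuller_coeff_zero, sub_self] at h2
    exact h2
  set e : WittVector p A :=
    WittVector.mk p fun i => (x - WittVector.teichmuller p (x.coeff 0)).coeff (i + 1) with he
  have hve : WittVector.verschiebung e = x - WittVector.teichmuller p (x.coeff 0) := by
    ext n
    cases n with
    | zero => rw [WittVector.verschiebung_coeff_zero, hd0]
    | succ n => rw [WittVector.verschiebung_coeff_succ, he, WittVector.coeff_mk]
  refine ⟨(WittVector.frobeniusEquiv p A).symm e, ?_⟩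
  have hfz : WittVector.frobenius ((WittVector.frobeniusEquiv p A).symm e) = e :=
    (WittVector.frobeniusEquiv p A).apply_symm_apply e
  have hpz : (p : WittVector p A) * ((WittVector.frobeniusEquiv p A).symm e) =
      x - WittVector.teichmuller p (x.coeff 0) := by
    have h3 := WittVector.verschiebung_frobenius ((WittVector.frobeniusEquiv p A).symm e)
    rw [hfz, hve] at h3
    rw [mul_comm]
    exact_mod_cast h3.symm
  rw [hpz]
  ring

theorem frobeniusEquiv_symm_iterate_pow (k : ℕ) (a : A) :
    ((_root_.frobeniusEquiv A p).symm)^[k] a ^ p ^ k = a := by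
  induction k generalizing a with
  | zero => simp
  | succ k ih =>
    rw [Function.iterate_succ_apply, pow_succ, pow_mul, ih]
    exact frobenius_apply_frobeniusEquiv_symm A p a

/-- Two ring homomorphisms `W(A) → R` (for `A` perfect of characteristic `p`, `R`
`p`-adically Hausdorff) agreeing modulo `p` are equal. -/
theorem hom_ext_of_mod_p [IsHausdorff (Ideal.span {(p : R)}) R]
    (f g : WittVector p A →+* R)
    (h : ∀ x, Ideal.Quotient.mk (Ideal.span {(p : R)}) (f x) =
      Ideal.Quotient.mk (Ideal.span {(p : R)}) (g x)) : f = g := by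
  have hmodp : ∀ x : WittVector p A, f x - g x ∈ Ideal.span {(p : R)} := fun x =>
    (Ideal.Quotient.mk_eq_mk_iff_sub_mem _ _).mp (h x)
  have key : ∀ n : ℕ, ∀ x : WittVector p A, f x - g x ∈ (Ideal.span {(p : R)}) ^ (n + 1) := by
    intro n
    induction n with
    | zero => intro x; rw [pow_one]; exact hmodp x
    | succ n ih =>
      intro x
      obtain ⟨z, hz⟩ := exists_teichmuller_add A x
      set b : A := ((_root_.frobeniusEquiv A p).symm)^[n + 1] (x.coeff 0) with hb
      have hteich : WittVector.teichmuller p (x.coeff 0) =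
          (WittVector.teichmuller p b) ^ p ^ (n + 1) := by
        rw [← MonoidHom.map_pow, hb, frobeniusEquiv_symm_iterate_pow]
      have hsplit : f x - g x =
          ((f (WittVector.teichmuller p b)) ^ p ^ (n + 1) -
            (g (WittVector.teichmuller p b)) ^ p ^ (n + 1)) +
          (p : R) * (f z - g z) := by
        rw [hz, hteich]
        push_cast [map_add, map_mul, map_pow, map_natCast]
        ring
      rw [hsplit]
      refine add_mem ?_ ?_
      · have h1 := pow_p_pow_sub_mem (p := p) (n + 1) (hmodp (WittVector.teichmuller p b))
        rw [← Ideal.span_singleton_pow] at h1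
        exact Ideal.pow_le_pow_right (by omega) h1
      · have hpmem : (p : R) ∈ Ideal.span {(p : R)} := Ideal.mem_span_singleton_self _
        have h2 := Ideal.mul_mem_mul hpmem (ih z)
        rwa [← pow_succ'] at h2
  ext x
  rw [← sub_eq_zero]
  refine IsHausdorff.haus (inferInstance : IsHausdorff (Ideal.span {(p : R)}) R)
    (f x - g x) fun n => ?_
  rw [SModEq.zero, smul_eq_mul, Ideal.mul_top]
  cases n with
  | zero => simp [Ideal.one_eq_top]
  | succ n => exact key n x

end Generic

variable (p R)

/-- A set-theoretic section of the coefficientwise reduction `W(R) → W(R/p)`. -/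
noncomputable def fInv : WittVector p (R ⧸ Ideal.span {(p : R)}) → WittVector p R :=
  fun y => WittVector.mk p fun i => surjInv Ideal.Quotient.mk_surjective (y.coeff i)

theorem map_fInv : Function.RightInverse (fInv p R)
    (WittVector.map (Ideal.Quotient.mk (Ideal.span {(p : R)}))) := by
  intro y
  ext n
  rw [WittVector.map_coeff]
  simp [fInv, surjInv_eq, WittVector.coeff_mk]

theorem ker_le (n : ℕ) :
    RingHom.ker (WittVector.map (p := p) (Ideal.Quotient.mk (Ideal.span {(p : R)}))) ≤
      RingHom.ker ((Ideal.Quotient.mk ((Ideal.span {(p : R)}) ^ (n + 1))).comp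
        (WittVector.ghostComponent n)) := by
  intro y hy
  rw [RingHom.mem_ker] at hy ⊢
  rw [RingHom.comp_apply, Ideal.Quotient.eq_zero_iff_mem, Ideal.span_singleton_pow,
    Ideal.mem_span_singleton]
  have hcoeff : ∀ i, (p : R) ∣ y.coeff i := by
    intro i
    have h0 : (WittVector.map (Ideal.Quotient.mk (Ideal.span {(p : R)})) y).coeff i = 0 := by
      rw [hy, WittVector.zero_coeff]
    rw [WittVector.map_coeff] at h0
    exact Ideal.mem_span_singleton.mp (Ideal.Quotient.eq_zero_iff_mem.mp h0)
  rw [WittVector.ghostComponent_apply, aeval_wittPolynomial]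
  apply Finset.dvd_sum
  intro i hi
  have hi' := Finset.mem_range.mp hi
  have h1 : (p : R) ^ (p ^ (n - i)) ∣ y.coeff i ^ p ^ (n - i) :=
    pow_dvd_pow_of_dvd (hcoeff i) _
  have h2 : (p : R) ^ (n + 1) ∣ (p : R) ^ i * (p : R) ^ (p ^ (n - i)) := by
    rw [← pow_add]
    refine pow_dvd_pow _ ?_
    have : n - i < p ^ (n - i) := Nat.lt_pow_self hp.out.one_lt
    omega
  exact dvd_trans h2 (mul_dvd_mul_left _ h1)

/-- The ring homomorphism `W(R/p) → R/p^(n+1)` induced by the `n`-th ghost component. -/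
noncomputable def gbar (n : ℕ) :
    WittVector p (R ⧸ Ideal.span {(p : R)}) →+* R ⧸ (Ideal.span {(p : R)}) ^ (n + 1) :=
  RingHom.liftOfRightInverse _ _ (map_fInv p R)
    ⟨(Ideal.Quotient.mk ((Ideal.span {(p : R)}) ^ (n + 1))).comp (WittVector.ghostComponent n),
      ker_le p R n⟩

theorem gbar_mk (n : ℕ) (y : WittVector p R) :
    gbar p R n (WittVector.map (Ideal.Quotient.mk (Ideal.span {(p : R)})) y) =
      Ideal.Quotient.mk _ (WittVector.ghostComponent n y) :=
  RingHom.liftOfRightInverse_comp_apply _ _ (map_fInv p R) _ y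

section CharP

variable [CharP (R ⧸ Ideal.span {(p : R)}) p]

/-- The approximations `θ̄ₙ : W(R^♭) → R/p^(n+1)` to Fontaine's map. -/
noncomputable def thetaBar (n : ℕ) :
    WittVector p (Perfection (R ⧸ Ideal.span {(p : R)}) p) →+*
      R ⧸ (Ideal.span {(p : R)}) ^ (n + 1) :=
  (gbar p R n).comp (WittVector.map (Perfection.coeff _ p n))

theorem thetaBar_eq (n : ℕ) (x : WittVector p (Perfection (R ⧸ Ideal.span {(p : R)}) p))
    (y : WittVector p R)
    (hy : ∀ i, Ideal.Quotient.mk (Ideal.span {(p : R)}) (y.coeff i) =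
      Perfection.coeff _ p n (x.coeff i)) :
    thetaBar p R n x = Ideal.Quotient.mk _ (WittVector.ghostComponent n y) := by
  have hmap : WittVector.map (Ideal.Quotient.mk (Ideal.span {(p : R)})) y =
      WittVector.map (Perfection.coeff _ p n) x := by
    ext i
    rw [WittVector.map_coeff, WittVector.map_coeff, hy]
  rw [thetaBar, RingHom.comp_apply, ← hmap, gbar_mk]

theorem exists_lift (n : ℕ) (x : WittVector p (Perfection (R ⧸ Ideal.span {(p : R)}) p)) :
    ∃ y : WittVector p R, ∀ i, Ideal.Quotient.mk (Ideal.span {(p : R)}) (y.coeff i) =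
      Perfection.coeff _ p n (x.coeff i) := by
  refine ⟨fInv p R (WittVector.map (Perfection.coeff _ p n) x), fun i => ?_⟩
  have := congrArg (fun w : WittVector p (R ⧸ Ideal.span {(p : R)}) => w.coeff i)
    (map_fInv p R (WittVector.map (Perfection.coeff _ p n) x))
  simpa [WittVector.map_coeff] using this

/-- Successive approximations are compatible. -/
theorem thetaBar_compat (n : ℕ)
    (x : WittVector p (Perfection (R ⧸ Ideal.span {(p : R)}) p)) (a b : R)
    (ha : Ideal.Quotient.mk ((Ideal.span {(p : R)}) ^ (n + 2)) a = thetaBar p R (n + 1) x)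
    (hb : Ideal.Quotient.mk ((Ideal.span {(p : R)}) ^ (n + 1)) b = thetaBar p R n x) :
    a - b ∈ (Ideal.span {(p : R)}) ^ (n + 1) := by
  obtain ⟨y, hy⟩ := exists_lift p R (n + 1) x
  set y' : WittVector p R := WittVector.mk p fun i => y.coeff i ^ p with hy'def
  have hy' : ∀ i, Ideal.Quotient.mk (Ideal.span {(p : R)}) (y'.coeff i) =
      Perfection.coeff _ p n (x.coeff i) := by
    intro i
    rw [hy'def, WittVector.coeff_mk, map_pow, hy i, Perfection.coeff_pow_p']
  have ha' : a - WittVector.ghostComponent (n + 1) y ∈ (Ideal.span {(p : R)}) ^ (n + 2) :=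
    (Ideal.Quotient.mk_eq_mk_iff_sub_mem _ _).mp (ha.trans (thetaBar_eq p R (n + 1) x y hy))
  have hb' : b - WittVector.ghostComponent n y' ∈ (Ideal.span {(p : R)}) ^ (n + 1) :=
    (Ideal.Quotient.mk_eq_mk_iff_sub_mem _ _).mp (hb.trans (thetaBar_eq p R n x y' hy'))
  have hghost : WittVector.ghostComponent (n + 1) y - WittVector.ghostComponent n y' ∈
      (Ideal.span {(p : R)}) ^ (n + 1) := by
    rw [WittVector.ghostComponent_apply, WittVector.ghostComponent_apply,
      aeval_wittPolynomial, aeval_wittPolynomial, Finset.sum_range_succ]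
    have hsum : (∑ i ∈ Finset.range (n + 1), (p : R) ^ i * y.coeff i ^ p ^ (n + 1 - i)) =
        ∑ i ∈ Finset.range (n + 1), (p : R) ^ i * y'.coeff i ^ p ^ (n - i) := by
      refine Finset.sum_congr rfl fun i hi => ?_
      have hi' := Finset.mem_range.mp hi
      rw [hy'def, WittVector.coeff_mk, ← pow_mul]
      congr 2
      have hexp : n + 1 - i = (n - i) + 1 := by omega
      rw [hexp, pow_succ']
    rw [hsum]
    rw [Ideal.span_singleton_pow, Ideal.mem_span_singleton]
    simp only [add_sub_cancel_left]
    exact dvd_mul_right _ _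
  have hstep : a - b = (a - WittVector.ghostComponent (n + 1) y) +
      ((WittVector.ghostComponent (n + 1) y - WittVector.ghostComponent n y') +
        (WittVector.ghostComponent n y' - b)) := by ring
  rw [hstep]
  refine add_mem ?_ (add_mem hghost ?_)
  · exact Ideal.pow_le_pow_right (by omega) ha'
  · rw [← neg_sub]; exact neg_mem hb'

section Complete

variable [IsAdicComplete (Ideal.span {(p : R)}) R]

theorem eq_of_sub_mem {a b : R} (h : ∀ n : ℕ, a - b ∈ (Ideal.span {(p : R)}) ^ (n + 1)) :
    a = b := by
  rw [← sub_eq_zero]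
  refine IsHausdorff.haus (IsAdicComplete.toIsHausdorff (I := Ideal.span {(p : R)}))
    (a - b) fun n => ?_
  rw [SModEq.zero, smul_eq_mul, Ideal.mul_top]
  cases n with
  | zero => simp [Ideal.one_eq_top]
  | succ n => exact h n

/-- A choice of representative of `thetaBar n x`. -/
noncomputable def seq (x : WittVector p (Perfection (R ⧸ Ideal.span {(p : R)}) p))
    (n : ℕ) : R :=
  surjInv Ideal.Quotient.mk_surjective (thetaBar p R n x)

theorem seq_spec (x : WittVector p (Perfection (R ⧸ Ideal.span {(p : R)}) p)) (n : ℕ) :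
    Ideal.Quotient.mk ((Ideal.span {(p : R)}) ^ (n + 1)) (seq p R x n) = thetaBar p R n x :=
  surjInv_eq _ _

theorem seq_succ_sub_mem (x : WittVector p (Perfection (R ⧸ Ideal.span {(p : R)}) p))
    (n : ℕ) : seq p R x n - seq p R x (n + 1) ∈ (Ideal.span {(p : R)}) ^ (n + 1) := by
  have h := thetaBar_compat p R n x (seq p R x (n + 1)) (seq p R x n)
    (seq_spec p R x (n + 1)) (seq_spec p R x n)
  rw [← neg_sub]
  exact neg_mem h

theorem seq_sub_mem (x : WittVector p (Perfection (R ⧸ Ideal.span {(p : R)}) p))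
    {m n : ℕ} (h : m ≤ n) : seq p R x m - seq p R x n ∈ (Ideal.span {(p : R)}) ^ (m + 1) := by
  induction n with
  | zero =>
    obtain rfl : m = 0 := Nat.le_zero.mp h
    simp
  | succ n ih =>
    rcases Nat.lt_or_ge m (n + 1) with hm | hm
    · have h1 := ih (by omega)
      have h2 : seq p R x n - seq p R x (n + 1) ∈ (Ideal.span {(p : R)}) ^ (m + 1) :=
        Ideal.pow_le_pow_right (by omega) (seq_succ_sub_mem p R x n)
      have heq : seq p R x m - seq p R x (n + 1) =
          (seq p R x m - seq p R x n) + (seq p R x n - seq p R x (n + 1)) := by ring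
      rw [heq]
      exact add_mem h1 h2
    · obtain rfl : m = n + 1 := by omega
      simp

theorem seq_cauchy (x : WittVector p (Perfection (R ⧸ Ideal.span {(p : R)}) p)) :
    ∀ {m n : ℕ}, m ≤ n → seq p R x m ≡ seq p R x n
      [SMOD ((Ideal.span {(p : R)}) ^ m • ⊤ : Submodule R R)] := by
  intro m n h
  rw [SModEq.sub_mem, smul_eq_mul, Ideal.mul_top]
  exact Ideal.pow_le_pow_right (by omega) (seq_sub_mem p R x h)

/-- The underlying function of Fontaine's map, obtained as a `p`-adic limit. -/
noncomputable def thetaFun (x : WittVector p (Perfection (R ⧸ Ideal.span {(p : R)}) p)) :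
    R :=
  (IsPrecomplete.prec (IsAdicComplete.toIsPrecomplete
    (I := Ideal.span {(p : R)})) (seq_cauchy p R x)).choose

theorem thetaFun_spec (x : WittVector p (Perfection (R ⧸ Ideal.span {(p : R)}) p))
    (n : ℕ) :
    Ideal.Quotient.mk ((Ideal.span {(p : R)}) ^ (n + 1)) (thetaFun p R x) =
      thetaBar p R n x := by
  have hL := (IsPrecomplete.prec (IsAdicComplete.toIsPrecomplete
    (I := Ideal.span {(p : R)})) (seq_cauchy p R x)).choose_spec
  have h1 : seq p R x (n + 1) - thetaFun p R x ∈ (Ideal.span {(p : R)}) ^ (n + 1) := by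
    have := hL (n + 1)
    rwa [SModEq.sub_mem, smul_eq_mul, Ideal.mul_top] at this
  have h2 := seq_succ_sub_mem p R x n
  have h3 : seq p R x n - thetaFun p R x ∈ (Ideal.span {(p : R)}) ^ (n + 1) := by
    have heq : seq p R x n - thetaFun p R x =
        (seq p R x n - seq p R x (n + 1)) + (seq p R x (n + 1) - thetaFun p R x) := by ring
    rw [heq]
    exact add_mem h2 h1
  rw [← seq_spec p R x n, Ideal.Quotient.mk_eq_mk_iff_sub_mem, ← neg_sub]
  exact neg_mem h3

/-- Fontaine's map `θ : W(R^♭) → R` as a ring homomorphism. -/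
noncomputable def theta :
    WittVector p (Perfection (R ⧸ Ideal.span {(p : R)}) p) →+* R where
  toFun := thetaFun p R
  map_one' := by
    refine eq_of_sub_mem p R fun n => ?_
    rw [← Ideal.Quotient.mk_eq_mk_iff_sub_mem, thetaFun_spec, map_one, map_one]
  map_mul' x y := by
    refine eq_of_sub_mem p R fun n => ?_
    rw [← Ideal.Quotient.mk_eq_mk_iff_sub_mem, thetaFun_spec, map_mul, map_mul,
      thetaFun_spec, thetaFun_spec]
  map_zero' := by
    refine eq_of_sub_mem p R fun n => ?_
    rw [← Ideal.Quotient.mk_eq_mk_iff_sub_mem, thetaFun_spec, map_zero, map_zero]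
  map_add' x y := by
    refine eq_of_sub_mem p R fun n => ?_
    rw [← Ideal.Quotient.mk_eq_mk_iff_sub_mem, thetaFun_spec, map_add, map_add,
      thetaFun_spec, thetaFun_spec]

theorem theta_spec (x : WittVector p (Perfection (R ⧸ Ideal.span {(p : R)}) p)) :
    Ideal.Quotient.mk (Ideal.span {(p : R)}) (theta p R x) =
      Perfection.coeff (R ⧸ Ideal.span {(p : R)}) p 0 (x.coeff 0) := by
  obtain ⟨y, hy⟩ := exists_lift p R 0 x
  have h0 : Ideal.Quotient.mk ((Ideal.span {(p : R)}) ^ (0 + 1)) (theta p R x) =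
      thetaBar p R 0 x := thetaFun_spec p R x 0
  rw [thetaBar_eq p R 0 x y hy, Ideal.Quotient.mk_eq_mk_iff_sub_mem, zero_add, pow_one] at h0
  have h1 : Ideal.Quotient.mk (Ideal.span {(p : R)}) (theta p R x) =
      Ideal.Quotient.mk (Ideal.span {(p : R)}) (WittVector.ghostComponent 0 y) :=
    (Ideal.Quotient.mk_eq_mk_iff_sub_mem _ _).mpr h0
  rw [h1, ghostComponent_zero_eq, hy 0]

end Complete

end CharP

end FontaineAux

/-- **Fontaine's map.**  Let `R` be a `p`-adically complete, `p`-torsion-free commutative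
ring whose reduction `R/(p)` has characteristic `p`, and let `R^♭` be the inverse-limit
perfection of `R/(p)`.  Then there is a unique ring homomorphism
`θ : W(R^♭) → R` whose reduction modulo `p` sends a Witt vector `x` to the zeroth
component of its zeroth coefficient. -/
theorem fontaine_theta_exists_unique
    (p : ℕ) [Fact p.Prime] (R : Type*) [CommRing R]
    [IsAdicComplete (Ideal.span {(p : R)}) R]
    (htf : ∀ x : R, (p : R) * x = 0 → x = 0)
    [CharP (R ⧸ Ideal.span {(p : R)}) p] :
    ∃! θ : WittVector p (Perfection (R ⧸ Ideal.span {(p : R)}) p) →+* R,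
      ∀ x, Ideal.Quotient.mk (Ideal.span {(p : R)}) (θ x) =
        Perfection.coeff (R ⧸ Ideal.span {(p : R)}) p 0 (x.coeff 0) := by
  refine ⟨FontaineAux.theta p R, FontaineAux.theta_spec p R, fun θ' hθ' => ?_⟩
  exact FontaineAux.hom_ext_of_mod_p (Perfection (R ⧸ Ideal.span {(p : R)}) p) θ'
    (FontaineAux.theta p R)
    (fun x => (hθ' x).trans (FontaineAux.theta_spec p R x).symm)
end
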